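/- arXiv:1706.02155 — 2 statements merged into one kernel-verified Lean document; each statement's English description precedes it below -/
import Mathlib

section
/- Let Ω be the open unit disk in ℝ² ≅ ℂ. If γ ∈ L²(Ω) satisfies ∫_Ω γ(z) ⟨∇Re(z^i), ∇Re(z^j)⟩ dz = 0 and ∫_Ω γ(z) ⟨∇Re(z^i), ∇Im(z^j)⟩ dz = 0 for all integers i, j ≥ 1, then γ = 0 almost everywhere on Ω. In other words, γ ∈ L²(Ω) is uniquely determined by the coefficients of the linearized Dirichlet-to-Neumann map in the trigonometric basis. -/
open MeasureTheory Real
open scoped RealInnerProductSpace BoundedContinuousFunction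

private lemma hasGradientAt_re_pow (n : ℕ) (z : ℂ) :
    HasGradientAt (fun w : ℂ => (w ^ n).re)
      ((starRingEnd ℂ) ((n : ℂ) * z ^ (n - 1))) z := by
  rw [hasGradientAt_iff_hasFDerivAt]
  have h1 : HasFDerivAt (fun w : ℂ => w ^ n)
      ((ContinuousLinearMap.smulRight (1 : ℂ →L[ℂ] ℂ)
        ((n : ℂ) * z ^ (n - 1))).restrictScalars ℝ) z :=
    ((hasDerivAt_pow n z).hasFDerivAt).restrictScalars ℝ
  have h2 := (Complex.reCLM.hasFDerivAt (x := z ^ n)).comp z h1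
  refine h2.congr_fderiv ?_
  refine ContinuousLinearMap.ext fun v => ?_
  simp [InnerProductSpace.toDual_apply_apply, Complex.inner, mul_comm]

private lemma hasGradientAt_im_pow (n : ℕ) (z : ℂ) :
    HasGradientAt (fun w : ℂ => (w ^ n).im)
      ((starRingEnd ℂ) (-Complex.I * ((n : ℂ) * z ^ (n - 1)))) z := by
  rw [hasGradientAt_iff_hasFDerivAt]
  have h1 : HasFDerivAt (fun w : ℂ => w ^ n)
      ((ContinuousLinearMap.smulRight (1 : ℂ →L[ℂ] ℂ)
        ((n : ℂ) * z ^ (n - 1))).restrictScalars ℝ) z :=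
    ((hasDerivAt_pow n z).hasFDerivAt).restrictScalars ℝ
  have h2 := (Complex.imCLM.hasFDerivAt (x := z ^ n)).comp z h1
  refine h2.congr_fderiv ?_
  refine ContinuousLinearMap.ext fun v => ?_
  simp [InnerProductSpace.toDual_apply_apply, Complex.inner]
  ring

private lemma inner_grad_cc (m n : ℕ) (z : ℂ) :
    ⟪gradient (fun w : ℂ => (w ^ (m + 1)).re) z,
      gradient (fun w : ℂ => (w ^ (n + 1)).re) z⟫
      = ((m + 1) * (n + 1) : ℝ) * (z ^ m * (starRingEnd ℂ) z ^ n).re := by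
  rw [(hasGradientAt_re_pow (m + 1) z).gradient,
    (hasGradientAt_re_pow (n + 1) z).gradient, Complex.inner, Complex.conj_conj]
  have : (((m : ℕ) + 1 : ℕ) : ℂ) * z ^ ((m + 1) - 1)
      * (starRingEnd ℂ) ((((n : ℕ) + 1 : ℕ) : ℂ) * z ^ ((n + 1) - 1))
      = ((((m : ℝ) + 1) * ((n : ℝ) + 1) : ℝ) : ℂ)
        * (z ^ m * (starRingEnd ℂ) z ^ n) := by
    simp only [Nat.add_sub_cancel, map_mul, map_pow, Complex.conj_natCast]
    push_cast
    ring
  rw [mul_comm ((starRingEnd ℂ) _), this, Complex.re_ofReal_mul]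

private lemma inner_grad_cs (m n : ℕ) (z : ℂ) :
    ⟪gradient (fun w : ℂ => (w ^ (m + 1)).re) z,
      gradient (fun w : ℂ => (w ^ (n + 1)).im) z⟫
      = -(((m + 1) * (n + 1) : ℝ) * (z ^ m * (starRingEnd ℂ) z ^ n).im) := by
  rw [(hasGradientAt_re_pow (m + 1) z).gradient,
    (hasGradientAt_im_pow (n + 1) z).gradient, Complex.inner, Complex.conj_conj]
  have : (((m : ℕ) + 1 : ℕ) : ℂ) * z ^ ((m + 1) - 1)
      * (starRingEnd ℂ) (-Complex.I * ((((n : ℕ) + 1 : ℕ) : ℂ) * z ^ ((n + 1) - 1)))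
      = ((((m : ℝ) + 1) * ((n : ℝ) + 1) : ℝ) : ℂ)
        * (Complex.I * (z ^ m * (starRingEnd ℂ) z ^ n)) := by
    simp only [Nat.add_sub_cancel, map_mul, map_pow, map_neg, Complex.conj_I, Complex.conj_natCast]
    push_cast
    ring
  rw [mul_comm ((starRingEnd ℂ) _), this, Complex.re_ofReal_mul]
  simp only [Complex.mul_re, Complex.I_re, Complex.I_im]
  ring_nf

/-- uniqueness for the linearized EIT problem. If `γ ∈ L²` of the unit
disk has all entries `∫_Ω γ ⟨∇Re(z^i), ∇Re(z^j)⟩` and `∫_Ω γ ⟨∇Re(z^i), ∇Im(z^j)⟩`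
(`i, j ≥ 1`) of the linearized Dirichlet-to-Neumann map equal to zero, then `γ = 0`
almost everywhere on the disk. -/
theorem linearized_EIT_uniqueness (γ : ℂ → ℝ)
    (hγ : MemLp γ 2 (volume.restrict (Metric.ball (0:ℂ) 1)))
    (hcc : ∀ i j : ℕ, 1 ≤ i → 1 ≤ j →
      (∫ z in Metric.ball (0:ℂ) 1,
        γ z * ⟪gradient (fun w : ℂ => (w ^ i).re) z,
               gradient (fun w : ℂ => (w ^ j).re) z⟫) = 0)
    (hcs : ∀ i j : ℕ, 1 ≤ i → 1 ≤ j →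
      (∫ z in Metric.ball (0:ℂ) 1,
        γ z * ⟪gradient (fun w : ℂ => (w ^ i).re) z,
               gradient (fun w : ℂ => (w ^ j).im) z⟫) = 0) :
    ∀ᵐ z ∂(volume.restrict (Metric.ball (0:ℂ) 1)), γ z = 0 := by
  haveI : IsFiniteMeasure (volume.restrict (Metric.ball (0:ℂ) 1)) :=
    ⟨by rw [Measure.restrict_apply_univ]; exact measure_ball_lt_top⟩
  have hIntγ : Integrable γ (volume.restrict (Metric.ball (0:ℂ) 1)) :=
    hγ.integrable one_le_two
  -- integrability of γ against any continuous function
  have hIntγG : ∀ G : C(ℂ, ℂ), Integrable (fun z => (γ z : ℂ) * G z)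
      (volume.restrict (Metric.ball (0:ℂ) 1)) := by
    intro G
    obtain ⟨C, hC⟩ := (isCompact_closedBall (0:ℂ) 1).exists_bound_of_continuousOn
      G.continuous.continuousOn
    have hb : ∀ᵐ z ∂(volume.restrict (Metric.ball (0:ℂ) 1)), ‖G z‖ ≤ C :=
      (ae_restrict_iff' measurableSet_ball).2 (Filter.Eventually.of_forall fun z hz =>
        hC z (Metric.ball_subset_closedBall hz))
    have := Integrable.bdd_mul (c := C) hIntγ.ofReal
      G.continuous.aestronglyMeasurable hb
    simpa [mul_comm] using this
  -- integrability of γ against monomials (real/imag parts)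
  have hwle : ∀ m n : ℕ, ∀ z ∈ Metric.ball (0:ℂ) 1,
      ‖z ^ m * (starRingEnd ℂ) z ^ n‖ ≤ 1 := by
    intro m n z hz
    rw [mem_ball_zero_iff] at hz
    rw [norm_mul, norm_pow, norm_pow, Complex.norm_conj]
    have h0 : (0:ℝ) ≤ ‖z‖ := norm_nonneg _
    have h1 : ‖z‖ ≤ 1 := le_of_lt (by simpa using hz)
    exact mul_le_one₀ (pow_le_one₀ h0 h1) (by positivity) (pow_le_one₀ h0 h1)
  have hIntRe : ∀ m n : ℕ, Integrable
      (fun z => γ z * (z ^ m * (starRingEnd ℂ) z ^ n).re)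
      (volume.restrict (Metric.ball (0:ℂ) 1)) := by
    intro m n
    have hmeas : AEStronglyMeasurable (fun z : ℂ => (z ^ m * (starRingEnd ℂ) z ^ n).re)
        (volume.restrict (Metric.ball (0:ℂ) 1)) :=
      (Complex.continuous_re.comp ((continuous_pow m).mul
        (Complex.continuous_conj.pow n))).aestronglyMeasurable
    have hb : ∀ᵐ z ∂(volume.restrict (Metric.ball (0:ℂ) 1)),
        ‖(z ^ m * (starRingEnd ℂ) z ^ n).re‖ ≤ 1 :=
      (ae_restrict_iff' measurableSet_ball).2 (Filter.Eventually.of_forall fun z hz =>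
        (Complex.abs_re_le_norm _).trans (hwle m n z hz))
    have := Integrable.bdd_mul (c := 1) hIntγ hmeas hb
    simpa [mul_comm] using this
  have hIntIm : ∀ m n : ℕ, Integrable
      (fun z => γ z * (z ^ m * (starRingEnd ℂ) z ^ n).im)
      (volume.restrict (Metric.ball (0:ℂ) 1)) := by
    intro m n
    have hmeas : AEStronglyMeasurable (fun z : ℂ => (z ^ m * (starRingEnd ℂ) z ^ n).im)
        (volume.restrict (Metric.ball (0:ℂ) 1)) :=
      (Complex.continuous_im.comp ((continuous_pow m).mul
        (Complex.continuous_conj.pow n))).aestronglyMeasurable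
    have hb : ∀ᵐ z ∂(volume.restrict (Metric.ball (0:ℂ) 1)),
        ‖(z ^ m * (starRingEnd ℂ) z ^ n).im‖ ≤ 1 :=
      (ae_restrict_iff' measurableSet_ball).2 (Filter.Eventually.of_forall fun z hz =>
        (Complex.abs_im_le_norm _).trans (hwle m n z hz))
    have := Integrable.bdd_mul (c := 1) hIntγ hmeas hb
    simpa [mul_comm] using this
  -- moments vanish: real parts
  have key_re : ∀ m n : ℕ,
      (∫ z in Metric.ball (0:ℂ) 1, γ z * (z ^ m * (starRingEnd ℂ) z ^ n).re) = 0 := by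
    intro m n
    have h := hcc (m + 1) (n + 1) (Nat.le_add_left 1 m) (Nat.le_add_left 1 n)
    have h2 : (∫ z in Metric.ball (0:ℂ) 1,
        γ z * ⟪gradient (fun w : ℂ => (w ^ (m + 1)).re) z,
               gradient (fun w : ℂ => (w ^ (n + 1)).re) z⟫)
        = ((m + 1) * (n + 1) : ℝ)
          * ∫ z in Metric.ball (0:ℂ) 1, γ z * (z ^ m * (starRingEnd ℂ) z ^ n).re := by
      rw [← integral_const_mul]
      exact integral_congr_ae (Filter.Eventually.of_forall fun z => by
        beta_reduce; rw [inner_grad_cc]; ring)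
    rw [h2] at h
    have hmn : ((m + 1) * (n + 1) : ℝ) ≠ 0 := by positivity
    exact (mul_eq_zero.mp h).resolve_left hmn
  -- moments vanish: imaginary parts
  have key_im : ∀ m n : ℕ,
      (∫ z in Metric.ball (0:ℂ) 1, γ z * (z ^ m * (starRingEnd ℂ) z ^ n).im) = 0 := by
    intro m n
    have h := hcs (m + 1) (n + 1) (Nat.le_add_left 1 m) (Nat.le_add_left 1 n)
    have h2 : (∫ z in Metric.ball (0:ℂ) 1,
        γ z * ⟪gradient (fun w : ℂ => (w ^ (m + 1)).re) z,
               gradient (fun w : ℂ => (w ^ (n + 1)).im) z⟫)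
        = (-((m + 1) * (n + 1)) : ℝ)
          * ∫ z in Metric.ball (0:ℂ) 1, γ z * (z ^ m * (starRingEnd ℂ) z ^ n).im := by
      rw [← integral_const_mul]
      exact integral_congr_ae (Filter.Eventually.of_forall fun z => by
        beta_reduce; rw [inner_grad_cs]; ring)
    rw [h2] at h
    have hmn : (-((m + 1) * (n + 1)) : ℝ) ≠ 0 := neg_ne_zero.mpr (by positivity)
    exact (mul_eq_zero.mp h).resolve_left hmn
  -- complex moments vanish
  have key1 : ∀ m n : ℕ,
      (∫ z in Metric.ball (0:ℂ) 1, (γ z : ℂ) * (z ^ m * (starRingEnd ℂ) z ^ n)) = 0 := by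
    intro m n
    have hsplit : (∫ z in Metric.ball (0:ℂ) 1, (γ z : ℂ) * (z ^ m * (starRingEnd ℂ) z ^ n))
        = ∫ z in Metric.ball (0:ℂ) 1,
            (((γ z * (z ^ m * (starRingEnd ℂ) z ^ n).re : ℝ) : ℂ)
              + ((γ z * (z ^ m * (starRingEnd ℂ) z ^ n).im : ℝ) : ℂ) * Complex.I) :=
      integral_congr_ae (Filter.Eventually.of_forall fun z => by
        beta_reduce
        apply Complex.ext <;>
          simp [Complex.mul_re, Complex.mul_im, Complex.add_re, Complex.add_im])
    have h1 : Integrable (fun z : ℂ => ((γ z * (z ^ m * (starRingEnd ℂ) z ^ n).re : ℝ) : ℂ))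
        (volume.restrict (Metric.ball (0:ℂ) 1)) := (hIntRe m n).ofReal
    have h2 : Integrable (fun z : ℂ =>
        ((γ z * (z ^ m * (starRingEnd ℂ) z ^ n).im : ℝ) : ℂ) * Complex.I)
        (volume.restrict (Metric.ball (0:ℂ) 1)) := (hIntIm m n).ofReal.mul_const _
    have e1 : (∫ z in Metric.ball (0:ℂ) 1,
        ((γ z * (z ^ m * (starRingEnd ℂ) z ^ n).re : ℝ) : ℂ)) = ((0 : ℝ) : ℂ) := by
      rw [← key_re m n]
      exact integral_ofReal
    have e2 : (∫ z in Metric.ball (0:ℂ) 1,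
        ((γ z * (z ^ m * (starRingEnd ℂ) z ^ n).im : ℝ) : ℂ)) = ((0 : ℝ) : ℂ) := by
      rw [← key_im m n]
      exact integral_ofReal
    rw [hsplit, integral_add h1 h2, integral_mul_const, e1, e2]
    simp
  -- Stone–Weierstrass machinery on the closed unit ball
  set K : Set ℂ := Metric.closedBall (0:ℂ) 1 with hKdef
  haveI : CompactSpace K := isCompact_iff_compactSpace.mp (isCompact_closedBall (0:ℂ) 1)
  set mono : ℕ × ℕ → C(K, ℂ) := fun p =>
    ⟨fun z => (z : ℂ) ^ p.1 * (starRingEnd ℂ) (z : ℂ) ^ p.2,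
      ((continuous_subtype_val.pow p.1).mul
        ((Complex.continuous_conj.comp continuous_subtype_val).pow p.2))⟩ with hmono
  set M : Submodule ℂ C(K, ℂ) := Submodule.span ℂ (Set.range mono) with hM
  have mono_mul : ∀ p q : ℕ × ℕ, mono p * mono q = mono (p.1 + q.1, p.2 + q.2) := by
    intro p q; ext z
    simp [hmono, pow_add]
    ring
  have hmulM : ∀ x ∈ M, ∀ y ∈ M, x * y ∈ M := by
    intro x hx
    induction hx using Submodule.span_induction with
    | mem a ha =>
      intro y hy
      induction hy using Submodule.span_induction with
      | mem b hb =>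
        obtain ⟨p, rfl⟩ := ha; obtain ⟨q, rfl⟩ := hb
        rw [mono_mul]; exact Submodule.subset_span ⟨_, rfl⟩
      | zero => rw [mul_zero]; exact zero_mem M
      | add y₁ y₂ h1 h2 ih1 ih2 => rw [mul_add]; exact add_mem ih1 ih2
      | smul c y₁ h1 ih => rw [mul_smul_comm]; exact Submodule.smul_mem _ _ ih
    | zero => intro y hy; rw [zero_mul]; exact zero_mem M
    | add x₁ x₂ h1 h2 ih1 ih2 => intro y hy; rw [add_mul]; exact add_mem (ih1 y hy) (ih2 y hy)
    | smul c x₁ h1 ih => intro y hy; rw [smul_mul_assoc]; exact Submodule.smul_mem _ _ (ih y hy)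
  have hstarM : ∀ x ∈ M, star x ∈ M := by
    intro x hx
    induction hx using Submodule.span_induction with
    | mem a ha =>
      obtain ⟨p, rfl⟩ := ha
      have : star (mono p) = mono (p.2, p.1) := by
        ext z
        simp [hmono]
        ring
      rw [this]; exact Submodule.subset_span ⟨_, rfl⟩
    | zero => simpa using zero_mem M
    | add x₁ x₂ h1 h2 ih1 ih2 => rw [star_add]; exact add_mem ih1 ih2
    | smul c x₁ h1 ih => rw [star_smul]; exact Submodule.smul_mem _ _ ih
  have hA : ∀ f ∈ (polynomialFunctions K).starClosure, f ∈ M := by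
    intro f hf
    rw [polynomialFunctions.starClosure_eq_adjoin_X] at hf
    induction hf using StarAlgebra.adjoin_induction with
    | mem g hg =>
      rw [Set.mem_singleton_iff] at hg; subst hg
      have : (Polynomial.toContinuousMapOnAlgHom K) Polynomial.X = mono (1, 0) := by
        ext z; simp [hmono]
      rw [this]; exact Submodule.subset_span ⟨_, rfl⟩
    | algebraMap r =>
      have : (algebraMap ℂ C(K, ℂ)) r = r • mono (0, 0) := by
        ext z; simp [hmono]
      rw [this]; exact Submodule.smul_mem _ _ (Submodule.subset_span ⟨_, rfl⟩)
    | add x y hx hy ihx ihy => exact add_mem ihx ihy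
    | mul x y hx hy ihx ihy => exact hmulM _ ihx _ ihy
    | star x hx ih => exact hstarM _ ih
  -- every element of M integrates γ to zero, via a global representative
  have hQ : ∀ g ∈ M, ∃ G : C(ℂ, ℂ), (∀ z (hz : z ∈ K), G z = g ⟨z, hz⟩) ∧
      (∫ z in Metric.ball (0:ℂ) 1, (γ z : ℂ) * G z) = 0 := by
    intro g hg
    induction hg using Submodule.span_induction with
    | mem a ha =>
      obtain ⟨⟨m, n⟩, rfl⟩ := ha
      exact ⟨⟨fun z => z ^ m * (starRingEnd ℂ) z ^ n,
        (continuous_pow m).mul (Complex.continuous_conj.pow n)⟩,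
        fun z hz => rfl, key1 m n⟩
    | zero => exact ⟨0, fun z hz => rfl, by simp⟩
    | add x y hx hy ihx ihy =>
      obtain ⟨G₁, hG₁, hI₁⟩ := ihx; obtain ⟨G₂, hG₂, hI₂⟩ := ihy
      refine ⟨G₁ + G₂, fun z hz => by simp [hG₁ z hz, hG₂ z hz], ?_⟩
      have hsplit : (∫ z in Metric.ball (0:ℂ) 1, (γ z : ℂ) * (G₁ + G₂) z)
          = ∫ z in Metric.ball (0:ℂ) 1, ((γ z : ℂ) * G₁ z + (γ z : ℂ) * G₂ z) :=
        integral_congr_ae (Filter.Eventually.of_forall fun z => by beta_reduce; simp; ring)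
      rw [hsplit, integral_add (hIntγG G₁) (hIntγG G₂), hI₁, hI₂, add_zero]
    | smul c x hx ih =>
      obtain ⟨G, hG, hI⟩ := ih
      refine ⟨c • G, fun z hz => by simp [hG z hz], ?_⟩
      have hsplit : (∫ z in Metric.ball (0:ℂ) 1, (γ z : ℂ) * (c • G) z)
          = ∫ z in Metric.ball (0:ℂ) 1, c * ((γ z : ℂ) * G z) :=
        integral_congr_ae (Filter.Eventually.of_forall fun z => by beta_reduce; simp; ring)
      rw [hsplit, integral_const_mul, hI, mul_zero]
  -- density of M in C(K, ℂ)
  have hdenseK : ∀ f : C(K, ℂ), f ∈ closure (M : Set C(K, ℂ)) := by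
    intro f
    have h1 : f ∈ (polynomialFunctions K).starClosure.topologicalClosure := by
      rw [polynomialFunctions.starClosure_topologicalClosure]; trivial
    have h2 : f ∈ closure ((polynomialFunctions K).starClosure : Set C(K, ℂ)) := by
      rwa [← SetLike.mem_coe, StarSubalgebra.topologicalClosure_coe] at h1
    exact closure_mono (fun x hx => hA x hx) h2
  -- conclusion for bounded continuous functions
  have keyC : ∀ h : ℂ →ᵇ ℂ,
      (∫ z in Metric.ball (0:ℂ) 1, (γ z : ℂ) * h z) = 0 := by
    intro h
    set f : C(K, ℂ) := h.toContinuousMap.restrict K with hf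
    have hIntγh : Integrable (fun z => (γ z : ℂ) * h z)
        (volume.restrict (Metric.ball (0:ℂ) 1)) := hIntγG h.toContinuousMap
    set I0 := ∫ z in Metric.ball (0:ℂ) 1, (γ z : ℂ) * h z with hI0
    set Cγ := ∫ z in Metric.ball (0:ℂ) 1, |γ z| with hCγ
    have hCγ0 : 0 ≤ Cγ := integral_nonneg fun z => abs_nonneg _
    have hIntabs : Integrable (fun z => |γ z|)
        (volume.restrict (Metric.ball (0:ℂ) 1)) := hIntγ.abs
    have hbound : ∀ ε > (0:ℝ), ‖I0‖ ≤ ε * Cγ := by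
      intro ε hε
      obtain ⟨g, hgM, hdist⟩ := Metric.mem_closure_iff.mp (hdenseK f) ε hε
      obtain ⟨G, hG, hIG⟩ := hQ g hgM
      have hsub : I0 = ∫ z in Metric.ball (0:ℂ) 1, (γ z : ℂ) * (h z - G z) := by
        have hsplit : (∫ z in Metric.ball (0:ℂ) 1, (γ z : ℂ) * (h z - G z))
            = ∫ z in Metric.ball (0:ℂ) 1, ((γ z : ℂ) * h z - (γ z : ℂ) * G z) :=
          integral_congr_ae (Filter.Eventually.of_forall fun z => by beta_reduce; ring)
        rw [hsplit, integral_sub hIntγh (hIntγG G), hIG, sub_zero]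
      have hInt3 : Integrable (fun z => (γ z : ℂ) * (h z - G z))
          (volume.restrict (Metric.ball (0:ℂ) 1)) := by
        have := hIntγh.sub (hIntγG G)
        simp only [mul_sub]; exact this
      rw [hsub]
      calc ‖∫ z in Metric.ball (0:ℂ) 1, (γ z : ℂ) * (h z - G z)‖
          ≤ ∫ z in Metric.ball (0:ℂ) 1, ‖(γ z : ℂ) * (h z - G z)‖ :=
            norm_integral_le_integral_norm _
        _ ≤ ∫ z in Metric.ball (0:ℂ) 1, ε * |γ z| := by
            refine integral_mono_ae hInt3.norm (hIntabs.const_mul ε) ?_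
            refine (ae_restrict_iff' measurableSet_ball).2
              (Filter.Eventually.of_forall fun z hz => ?_)
            show ‖(γ z : ℂ) * (h z - G z)‖ ≤ ε * |γ z|
            have hzK : z ∈ K := Metric.ball_subset_closedBall hz
            have h1 : ‖h z - G z‖ ≤ ε := by
              have : h z - G z = f ⟨z, hzK⟩ - g ⟨z, hzK⟩ := by
                rw [hG z hzK]; rfl
              rw [this, ← dist_eq_norm]
              exact le_of_lt (lt_of_le_of_lt (ContinuousMap.dist_apply_le_dist _) hdist)
            have : ‖(γ z : ℂ) * (h z - G z)‖ = |γ z| * ‖h z - G z‖ := by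
              rw [norm_mul, Complex.norm_real, Real.norm_eq_abs]
            rw [this]
            calc |γ z| * ‖h z - G z‖ ≤ |γ z| * ε :=
                  mul_le_mul_of_nonneg_left h1 (abs_nonneg _)
              _ = ε * |γ z| := mul_comm _ _
        _ = ε * Cγ := integral_const_mul ε _
    have hnorm : ‖I0‖ = 0 := by
      by_contra hne
      have hpos : 0 < ‖I0‖ := lt_of_le_of_ne (norm_nonneg _) (Ne.symm hne)
      have h1 := hbound (‖I0‖ / (2 * (Cγ + 1))) (by positivity)
      have h2 : ‖I0‖ / (2 * (Cγ + 1)) * Cγ < ‖I0‖ := by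
        rw [div_mul_eq_mul_div, div_lt_iff₀ (by positivity)]
        nlinarith
      linarith
    exact norm_eq_zero.mp hnorm
  -- L² conclusion
  have hγc : MemLp (fun z => (γ z : ℂ)) 2 (volume.restrict (Metric.ball (0:ℂ) 1)) :=
    hγ.ofReal
  set L := hγc.toLp _ with hL
  have hzero : ∀ f : ℂ →ᵇ ℂ,
      inner (𝕜 := ℂ) (BoundedContinuousFunction.toLp
        (E := ℂ) 2 (volume.restrict (Metric.ball (0:ℂ) 1)) ℂ f) L = 0 := by
    intro f
    rw [MeasureTheory.L2.inner_def]
    have h1 : ∀ᵐ z ∂(volume.restrict (Metric.ball (0:ℂ) 1)),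
        inner (𝕜 := ℂ) ((BoundedContinuousFunction.toLp (E := ℂ) 2
          (volume.restrict (Metric.ball (0:ℂ) 1)) ℂ f :
          Lp ℂ 2 (volume.restrict (Metric.ball (0:ℂ) 1))) z) (L z)
        = (γ z : ℂ) * (star f) z := by
      filter_upwards [BoundedContinuousFunction.coeFn_toLp 2
        (volume.restrict (Metric.ball (0:ℂ) 1)) ℂ f, hγc.coeFn_toLp] with z h1 h2
      rw [h1, h2, RCLike.inner_apply]
      simp [mul_comm]
    rw [integral_congr_ae h1]
    exact keyC (star f)
  have hall : ∀ x : Lp ℂ 2 (volume.restrict (Metric.ball (0:ℂ) 1)),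
      inner (𝕜 := ℂ) x L = 0 := by
    have hdense := BoundedContinuousFunction.toLp_denseRange (E := ℂ)
      (μ := volume.restrict (Metric.ball (0:ℂ) 1)) ℂ
      (by norm_num : (2 : ENNReal) ≠ ⊤)
    intro x
    refine DenseRange.induction_on hdense x ?_ hzero
    exact isClosed_eq (continuous_id.inner continuous_const) continuous_const
  have hL0 : L = 0 := by
    have := hall L
    rwa [inner_self_eq_zero] at this
  have hae : (fun z => (γ z : ℂ)) =ᵐ[volume.restrict (Metric.ball (0:ℂ) 1)] 0 := by
    have h1 : L =ᵐ[volume.restrict (Metric.ball (0:ℂ) 1)] fun z => (γ z : ℂ) :=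
      hγc.coeFn_toLp
    rw [hL0] at h1
    exact (h1.symm).trans (Lp.coeFn_zero ℂ 2 _)
  filter_upwards [hae] with z hz
  simpa using hz
end

section
/- Let Ω_h = {(x,y) ∈ ℝ² : x² + y² < 1, y > 0} be the open upper half disk, identified with a subset of ℂ via z = x + iy. If γ ∈ L²(Ω_h) satisfies ∫_{Ω_h} γ(z) ⟨∇Im(z^n), ∇Im(z^k)⟩ dz = 0 for all integers n, k ≥ 1, then γ = 0 almost everywhere on Ω_h. In other words, γ is uniquely determined by the linearized incomplete Dirichlet-to-Neumann data generated by the boundary functions sin(nφ), φ ∈ [0, π], on the upper half circle with homogeneous Dirichlet values on the flat part of the boundary. -/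
open MeasureTheory Real
open scoped RealInnerProductSpace

noncomputable section EITAux

private def Sp : Set ℂ := {z : ℂ | ‖z‖ < 1 ∧ 0 < z.im}
private def Sm : Set ℂ := {z : ℂ | ‖z‖ < 1 ∧ z.im < 0}
private def Db : Set ℂ := Metric.ball (0 : ℂ) 1

private lemma isOpen_Sp : IsOpen Sp :=
  (isOpen_lt continuous_norm continuous_const).inter
    (isOpen_lt continuous_const Complex.continuous_im)

private lemma isOpen_Sm : IsOpen Sm :=
  (isOpen_lt continuous_norm continuous_const).inter
    (isOpen_lt Complex.continuous_im continuous_const)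

private lemma Sp_subset_Db : Sp ⊆ Db := fun z hz => by
  simpa [Db, Metric.mem_ball, Complex.dist_eq] using hz.1

private lemma Sm_subset_Db : Sm ⊆ Db := fun z hz => by
  simpa [Db, Metric.mem_ball, Complex.dist_eq] using hz.1

private lemma line_null : volume {z : ℂ | z.im = 0} = 0 := by
  have h1 : {z : ℂ | z.im = 0} = (LinearMap.ker Complex.imLm : Set ℂ) := by
    ext z; simp [LinearMap.mem_ker, Complex.imLm]
  rw [h1]
  refine Measure.addHaar_submodule _ _ (fun htop => ?_)
  have : Complex.I ∈ LinearMap.ker Complex.imLm := htop ▸ Submodule.mem_top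
  simp [LinearMap.mem_ker, Complex.imLm] at this

private lemma Db_ae_eq : (Db : Set ℂ) =ᵐ[volume] ((Sp ∪ Sm : Set ℂ)) := by
  rw [MeasureTheory.ae_eq_set]
  constructor
  · refine measure_mono_null (fun z hz => ?_) line_null
    obtain ⟨hzD, hz2⟩ := hz
    simp only [Sp, Sm, Set.mem_union, Set.mem_setOf_eq, not_or, not_and] at hz2
    have habs : ‖z‖ < 1 := by
      simpa [Db, Metric.mem_ball, Complex.dist_eq] using hzD
    have h1 := hz2.1 habs
    have h2 := hz2.2 habs
    exact le_antisymm (not_lt.1 h1) (not_lt.1 h2)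
  · have : (Sp ∪ Sm) \ Db = ∅ := by
      rw [Set.diff_eq_empty]
      exact Set.union_subset Sp_subset_Db Sm_subset_Db
    simp [this]


private lemma conj_fun_eq : (⇑Complex.conjLIE : ℂ → ℂ) = fun z => (starRingEnd ℂ) z :=
  funext fun z => Complex.conjLIE_apply z

private lemma mp_conj : MeasurePreserving (fun z : ℂ => (starRingEnd ℂ) z) volume volume :=
  conj_fun_eq ▸ Complex.conjLIE.measurePreserving

private lemma me_conj : MeasurableEmbedding (fun z : ℂ => (starRingEnd ℂ) z) :=
  conj_fun_eq ▸ Complex.conjLIE.toHomeomorph.measurableEmbedding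

private lemma conj_preim_Sm : (fun z : ℂ => (starRingEnd ℂ) z) ⁻¹' Sm = Sp := by
  ext z
  simp only [Sp, Sm, Set.mem_preimage, Set.mem_setOf_eq, Complex.norm_conj, Complex.conj_im]
  constructor
  · rintro ⟨h1, h2⟩; exact ⟨h1, by linarith⟩
  · rintro ⟨h1, h2⟩; exact ⟨h1, by linarith⟩

private instance : IsFiniteMeasure (volume.restrict Db) := by
  constructor
  rw [Measure.restrict_apply_univ]
  exact measure_ball_lt_top


private def uab (a b : ℕ) : ℂ → ℂ := fun z => z ^ a * ((starRingEnd ℂ) z) ^ b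
private def gre (a b : ℕ) : ℂ → ℝ := fun z => (uab a b z).re
private def gim (a b : ℕ) : ℂ → ℝ := fun z => (uab a b z).im
private def genSet : Set (ℂ → ℝ) := {f | ∃ a b : ℕ, f = gre a b ∨ f = gim a b}
private def W : Submodule ℝ (ℂ → ℝ) := Submodule.span ℝ genSet

private lemma uab_mul (a b c d : ℕ) (z : ℂ) :
    uab a b z * uab c d z = uab (a + c) (b + d) z := by
  simp only [uab, pow_add]; ring

private lemma uab_conj (c d : ℕ) (z : ℂ) :
    (starRingEnd ℂ) (uab c d z) = uab d c z := by
  simp only [uab, map_mul, map_pow, Complex.conj_conj]; ring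

private lemma uab_cont (a b : ℕ) : Continuous (uab a b) :=
  ((continuous_pow a).comp continuous_id).mul
    ((continuous_pow b).comp Complex.continuous_conj)

private lemma uab_abs_le (a b : ℕ) {z : ℂ} (hz : z ∈ Db) : ‖uab a b z‖ ≤ 1 := by
  have h1 : ‖z‖ ≤ 1 := by
    have : ‖z‖ < 1 := by
      simpa [Db, Metric.mem_ball, Complex.dist_eq] using hz
    linarith
  calc ‖uab a b z‖ = ‖z‖ ^ a * ‖z‖ ^ b := by
        simp [uab, map_mul, map_pow]
    _ ≤ 1 * 1 := by
        exact mul_le_mul (pow_le_one₀ (norm_nonneg z) h1)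
          (pow_le_one₀ (norm_nonneg z) h1) (by positivity) zero_le_one
    _ = 1 := by ring

-- pointwise product identities
private lemma re_mul_re (x y : ℂ) :
    x.re * y.re = 2⁻¹ * ((x * y).re + (x * (starRingEnd ℂ) y).re) := by
  simp [Complex.mul_re, Complex.conj_re, Complex.conj_im]; ring

private lemma re_mul_im (x y : ℂ) :
    x.re * y.im = 2⁻¹ * ((x * y).im - (x * (starRingEnd ℂ) y).im) := by
  simp [Complex.mul_im, Complex.conj_re, Complex.conj_im]; ring

private lemma im_mul_re (x y : ℂ) :
    x.im * y.re = 2⁻¹ * ((x * y).im + (x * (starRingEnd ℂ) y).im) := by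
  simp [Complex.mul_im, Complex.conj_re, Complex.conj_im]; ring

private lemma im_mul_im (x y : ℂ) :
    x.im * y.im = 2⁻¹ * ((x * (starRingEnd ℂ) y).re - (x * y).re) := by
  simp [Complex.mul_re, Complex.conj_re, Complex.conj_im]; ring

private lemma gre_mem (a b : ℕ) : gre a b ∈ W := Submodule.subset_span ⟨a, b, Or.inl rfl⟩
private lemma gim_mem (a b : ℕ) : gim a b ∈ W := Submodule.subset_span ⟨a, b, Or.inr rfl⟩

private lemma gen_mul_mem {f g : ℂ → ℝ} (hf : f ∈ genSet) (hg : g ∈ genSet) : f * g ∈ W := by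
  obtain ⟨a, b, hf⟩ := hf
  obtain ⟨c, d, hg⟩ := hg
  have key : ∀ z : ℂ, uab a b z * (starRingEnd ℂ) (uab c d z) = uab (a + d) (b + c) z := by
    intro z; rw [uab_conj, uab_mul]
  rcases hf with rfl | rfl <;> rcases hg with rfl | rfl
  · have : gre a b * gre c d
        = (2⁻¹ : ℝ) • gre (a + c) (b + d) + (2⁻¹ : ℝ) • gre (a + d) (b + c) := by
      funext z
      simp only [Pi.mul_apply, Pi.add_apply, Pi.smul_apply, smul_eq_mul, gre]
      rw [← uab_mul a b c d, ← key z, re_mul_re]; ring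
    rw [this]
    exact add_mem (Submodule.smul_mem _ _ (gre_mem _ _)) (Submodule.smul_mem _ _ (gre_mem _ _))
  · have : gre a b * gim c d
        = (2⁻¹ : ℝ) • gim (a + c) (b + d) - (2⁻¹ : ℝ) • gim (a + d) (b + c) := by
      funext z
      simp only [Pi.mul_apply, Pi.sub_apply, Pi.smul_apply, smul_eq_mul, gre, gim]
      rw [← uab_mul a b c d, ← key z, re_mul_im]; ring
    rw [this]
    exact sub_mem (Submodule.smul_mem _ _ (gim_mem _ _)) (Submodule.smul_mem _ _ (gim_mem _ _))
  · have : gim a b * gre c d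
        = (2⁻¹ : ℝ) • gim (a + c) (b + d) + (2⁻¹ : ℝ) • gim (a + d) (b + c) := by
      funext z
      simp only [Pi.mul_apply, Pi.add_apply, Pi.smul_apply, smul_eq_mul, gre, gim]
      rw [← uab_mul a b c d, ← key z, im_mul_re]; ring
    rw [this]
    exact add_mem (Submodule.smul_mem _ _ (gim_mem _ _)) (Submodule.smul_mem _ _ (gim_mem _ _))
  · have : gim a b * gim c d
        = (2⁻¹ : ℝ) • gre (a + d) (b + c) - (2⁻¹ : ℝ) • gre (a + c) (b + d) := by
      funext z
      simp only [Pi.mul_apply, Pi.sub_apply, Pi.smul_apply, smul_eq_mul, gim, gre]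
      rw [← uab_mul a b c d, ← key z, im_mul_im]; ring
    rw [this]
    exact sub_mem (Submodule.smul_mem _ _ (gre_mem _ _)) (Submodule.smul_mem _ _ (gre_mem _ _))

private lemma W_mul_mem {f g : ℂ → ℝ} (hf : f ∈ W) (hg : g ∈ W) : f * g ∈ W := by
  induction hf using Submodule.span_induction with
  | mem x hx =>
    induction hg using Submodule.span_induction with
    | mem y hy => exact gen_mul_mem hx hy
    | zero => simpa using Submodule.zero_mem W
    | add y z _ _ hy hz => rw [mul_add]; exact add_mem hy hz
    | smul a y _ hy => rw [mul_smul_comm]; exact Submodule.smul_mem _ _ hy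
  | zero => simpa using Submodule.zero_mem W
  | add x y _ _ hx hy => rw [add_mul]; exact add_mem hx hy
  | smul a x _ hx => rw [smul_mul_assoc]; exact Submodule.smul_mem _ _ hx

private lemma W_cont {f : ℂ → ℝ} (hf : f ∈ W) : Continuous f := by
  induction hf using Submodule.span_induction with
  | mem x hx =>
    obtain ⟨a, b, hx⟩ := hx
    rcases hx with rfl | rfl
    · exact Complex.continuous_re.comp (uab_cont a b)
    · exact Complex.continuous_im.comp (uab_cont a b)
  | zero => exact continuous_const
  | add x y _ _ hx hy => exact hx.add hy
  | smul a x _ hx => exact hx.const_smul a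


private def Kc : Set ℂ := Metric.closedBall (0 : ℂ) 1

private instance : CompactSpace Kc := isCompact_iff_compactSpace.mp (isCompact_closedBall 0 1)

private def A : Subalgebra ℝ C(Kc, ℝ) where
  carrier := {u | ∃ f ∈ W, ∀ x : Kc, u x = f x}
  mul_mem' := by
    rintro u v ⟨f, hf, hu⟩ ⟨g, hg, hv⟩
    exact ⟨f * g, W_mul_mem hf hg, fun x => by simp [hu x, hv x]⟩
  add_mem' := by
    rintro u v ⟨f, hf, hu⟩ ⟨g, hg, hv⟩
    exact ⟨f + g, add_mem hf hg, fun x => by simp [hu x, hv x]⟩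
  one_mem' := ⟨gre 0 0, gre_mem 0 0, fun x => by simp [gre, uab]⟩
  zero_mem' := ⟨0, Submodule.zero_mem _, fun x => by simp⟩
  algebraMap_mem' := fun r =>
    ⟨r • gre 0 0, Submodule.smul_mem _ _ (gre_mem 0 0), fun x => by simp [gre, uab]⟩

private lemma A_sep : A.SeparatesPoints := by
  intro x y hxy
  have hne : (x : ℂ) ≠ (y : ℂ) := fun hc => hxy (Subtype.ext hc)
  by_cases hre : (x : ℂ).re = (y : ℂ).re
  · have him : (x : ℂ).im ≠ (y : ℂ).im := by
      intro hc; exact hne (Complex.ext hre hc)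
    refine ⟨_, ⟨⟨fun z : Kc => ((z : ℂ)).im, Complex.continuous_im.comp continuous_subtype_val⟩,
      ⟨gim 1 0, gim_mem 1 0, fun z => by simp [gim, uab]⟩, rfl⟩, by simpa using him⟩
  · refine ⟨_, ⟨⟨fun z : Kc => ((z : ℂ)).re, Complex.continuous_re.comp continuous_subtype_val⟩,
      ⟨gre 1 0, gre_mem 1 0, fun z => by simp [gre, uab]⟩, rfl⟩, by simpa using hre⟩

private lemma A_dense : A.topologicalClosure = ⊤ :=
  ContinuousMap.subalgebra_topologicalClosure_eq_top_of_separatesPoints A A_sep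


private lemma grad_im_pow (n : ℕ) (z : ℂ) :
    HasGradientAt (fun w : ℂ => (w ^ n).im)
      (Complex.I * (starRingEnd ℂ) ((n : ℂ) * z ^ (n - 1))) z := by
  rw [hasGradientAt_iff_hasFDerivAt]
  have h1 : HasFDerivAt (fun w : ℂ => w ^ n)
      ((ContinuousLinearMap.smulRight (1 : ℂ →L[ℂ] ℂ) ((n:ℂ) * z ^ (n-1))).restrictScalars ℝ) z :=
    (hasDerivAt_pow n z).hasFDerivAt.restrictScalars ℝ
  have h2 := Complex.imCLM.hasFDerivAt.comp z h1
  refine h2.congr_fderiv ?_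
  ext v
  simp [Complex.inner, Complex.mul_im, Complex.mul_re]
  ring

private lemma inner_grads (n k : ℕ) (z : ℂ) :
    ⟪gradient (fun w : ℂ => (w ^ n).im) z, gradient (fun w : ℂ => (w ^ k).im) z⟫
      = (n * k : ℝ) * (z ^ (n-1) * (starRingEnd ℂ) (z ^ (k-1))).re := by
  rw [(grad_im_pow n z).gradient, (grad_im_pow k z).gradient, Complex.inner]
  simp [Complex.mul_re, Complex.mul_im]
  ring

private theorem aux (γ : ℂ → ℝ) (hms : Measurable γ)
    (hγ : MemLp γ 2 (volume.restrict Sp))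
    (hmom : ∀ a b : ℕ, (∫ z in Sp, γ z * gre a b z) = 0) :
    ∀ᵐ z ∂(volume.restrict Sp), γ z = 0 := by
  classical
  set γt : ℂ → ℝ := fun z =>
    if 0 < z.im then γ z else if z.im < 0 then γ ((starRingEnd ℂ) z) else 0 with hγt
  have mγt : Measurable γt := by
    refine Measurable.ite (measurableSet_lt measurable_const Complex.measurable_im) hms ?_
    exact Measurable.ite (measurableSet_lt Complex.measurable_im measurable_const)
      (hms.comp me_conj.measurable) measurable_const
  have hSp_eq : ∀ z ∈ Sp, γt z = γ z := fun z hz => if_pos hz.2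
  have hSm_eq : ∀ z ∈ Sp, γt ((starRingEnd ℂ) z) = γ z := by
    intro z hz
    have h1 : ((starRingEnd ℂ) z).im = -z.im := Complex.conj_im z
    simp only [hγt]
    rw [if_neg (by rw [h1]; linarith [hz.2]), if_pos (by rw [h1]; linarith [hz.2]),
      Complex.conj_conj]
  haveI : IsFiniteMeasure (volume.restrict Sp) := by
    constructor
    rw [Measure.restrict_apply_univ]
    exact lt_of_le_of_lt (measure_mono Sp_subset_Db) measure_ball_lt_top
  have hInt : IntegrableOn γ Sp volume := hγ.integrable one_le_two
  have hIntSp : IntegrableOn γt Sp volume := by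
    refine hInt.congr ?_
    exact (ae_restrict_iff' isOpen_Sp.measurableSet).2
      (ae_of_all _ (fun z hz => (hSp_eq z hz).symm))
  have mpSm : MeasurePreserving (fun z : ℂ => (starRingEnd ℂ) z)
      (volume.restrict Sp) (volume.restrict Sm) := by
    have := mp_conj.restrict_preimage (s := Sm) isOpen_Sm.measurableSet
    rwa [conj_preim_Sm] at this
  have hIntSm : IntegrableOn γt Sm volume := by
    have h2 : Integrable (γt ∘ (fun z : ℂ => (starRingEnd ℂ) z)) (volume.restrict Sp) := by
      refine hInt.congr ?_
      exact (ae_restrict_iff' isOpen_Sp.measurableSet).2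
        (ae_of_all _ (fun z hz => (hSm_eq z hz).symm))
    exact (mpSm.integrable_comp_emb me_conj).mp h2
  have hIntDb : IntegrableOn γt Db volume := by
    have h1 : IntegrableOn γt (Sp ∪ Sm) volume := hIntSp.union hIntSm
    unfold IntegrableOn at h1 ⊢
    rwa [Measure.restrict_congr_set Db_ae_eq]
  have hIntMul : ∀ f : ℂ → ℝ, Continuous f →
      IntegrableOn (fun z => f z * γt z) Db volume := by
    intro f hf
    obtain ⟨C, hC⟩ := (isCompact_closedBall (0:ℂ) 1).exists_bound_of_continuousOn
      hf.continuousOn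
    refine hIntDb.bdd_mul (c := C) (hf.aestronglyMeasurable) ?_
    refine (ae_restrict_iff' measurableSet_ball).2 (ae_of_all _ (fun z hz => ?_))
    exact hC z (Metric.ball_subset_closedBall hz)
  have flip : ∀ F : ℂ → ℝ,
      (∫ z in Sm, γt z * F z) = ∫ z in Sp, γ z * F ((starRingEnd ℂ) z) := by
    intro F
    rw [← mpSm.integral_comp me_conj (fun z => γt z * F z)]
    exact setIntegral_congr_fun isOpen_Sp.measurableSet (fun z hz => by rw [hSm_eq z hz])
  have splitInt : ∀ f : ℂ → ℝ, Continuous f →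
      (∫ z in Db, γt z * f z)
        = (∫ z in Sp, γ z * f z) + ∫ z in Sp, γ z * f ((starRingEnd ℂ) z) := by
    intro f hf
    have h1 : (∫ z in Db, γt z * f z) = ∫ z in Sp ∪ Sm, γt z * f z := by
      rw [Measure.restrict_congr_set Db_ae_eq]
    have hdisj : Disjoint Sp Sm := by
      rw [Set.disjoint_left]
      rintro z ⟨_, h2⟩ ⟨_, h4⟩
      linarith
    have hi1 : IntegrableOn (fun z => γt z * f z) Sp volume := by
      refine ((hIntMul f hf).mono_set Sp_subset_Db).congr ?_
      exact ae_of_all _ (fun z => mul_comm (f z) (γt z))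
    have hi2 : IntegrableOn (fun z => γt z * f z) Sm volume := by
      refine ((hIntMul f hf).mono_set Sm_subset_Db).congr ?_
      exact ae_of_all _ (fun z => mul_comm (f z) (γt z))
    rw [h1, setIntegral_union hdisj isOpen_Sm.measurableSet hi1 hi2, flip f]
    congr 1
    exact setIntegral_congr_fun isOpen_Sp.measurableSet (fun z hz => by rw [hSp_eq z hz])
  have momRe : ∀ a b : ℕ, (∫ z in Db, γt z * gre a b z) = 0 := by
    intro a b
    rw [splitInt (gre a b) (Complex.continuous_re.comp (uab_cont a b))]
    have hconj : ∀ z : ℂ, gre a b ((starRingEnd ℂ) z) = gre a b z := by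
      intro z
      simp only [gre, uab, map_pow, Complex.conj_conj]
      rw [show ((starRingEnd ℂ) z) ^ a * z ^ b = (starRingEnd ℂ) (z ^ a * ((starRingEnd ℂ) z) ^ b)
        by rw [map_mul, map_pow, map_pow, Complex.conj_conj]]
      exact Complex.conj_re _
    simp only [hconj]
    rw [hmom a b]
    simp
  have momIm : ∀ a b : ℕ, (∫ z in Db, γt z * gim a b z) = 0 := by
    intro a b
    rw [splitInt (gim a b) (Complex.continuous_im.comp (uab_cont a b))]
    have hconj : ∀ z : ℂ, gim a b ((starRingEnd ℂ) z) = -gim a b z := by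
      intro z
      simp only [gim, uab, map_pow, Complex.conj_conj]
      rw [show ((starRingEnd ℂ) z) ^ a * z ^ b = (starRingEnd ℂ) (z ^ a * ((starRingEnd ℂ) z) ^ b)
        by rw [map_mul, map_pow, map_pow, Complex.conj_conj]]
      exact Complex.conj_im _
    simp only [hconj, mul_neg, integral_neg]
    ring
  have momW : ∀ f ∈ W, (∫ z in Db, γt z * f z) = 0 := by
    intro f hf
    induction hf using Submodule.span_induction with
    | mem x hx =>
      obtain ⟨a, b, hx⟩ := hx
      rcases hx with rfl | rfl
      · exact momRe a b
      · exact momIm a b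
    | zero => simp
    | add x y hx hy ihx ihy =>
      have hix : IntegrableOn (fun z => x z * γt z) Db volume := hIntMul x (W_cont hx)
      have hiy : IntegrableOn (fun z => y z * γt z) Db volume := hIntMul y (W_cont hy)
      simp only [Pi.add_apply, mul_add]
      rw [integral_add (hix.congr (ae_of_all _ (fun z => mul_comm (x z) (γt z))))
        (hiy.congr (ae_of_all _ (fun z => mul_comm (y z) (γt z)))), ihx, ihy, add_zero]
    | smul a x hx ihx =>
      simp only [Pi.smul_apply, smul_eq_mul]
      have : ∀ z : ℂ, γt z * (a * x z) = a * (γt z * x z) := fun z => by ring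
      simp only [this]
      rw [integral_const_mul, ihx, mul_zero]
  have hzeroDb : ∀ᵐ z ∂(volume.restrict Db), γt z = 0 := by
    refine ae_eq_zero_of_integral_contDiff_smul_eq_zero
      (Integrable.locallyIntegrable hIntDb) (fun g hg hsupp => ?_)
    have hIg : IntegrableOn (fun z => g z * γt z) Db volume := hIntMul g hg.continuous
    set c : ℝ := ∫ z in Db, |γt z| with hcdef
    have hc : 0 ≤ c := integral_nonneg fun z => abs_nonneg _
    set u : C(Kc, ℝ) := ⟨fun x => g x, hg.continuous.comp continuous_subtype_val⟩ with hu
    have hucl : u ∈ closure (A : Set C(Kc, ℝ)) := by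
      have h1 : u ∈ A.topologicalClosure := by rw [A_dense]; trivial
      rwa [← Subalgebra.topologicalClosure_coe]
    have key : ∀ ε : ℝ, 0 < ε → |∫ z in Db, g z * γt z| ≤ ε * c := by
      intro ε hε
      obtain ⟨v, hvA, hv⟩ := Metric.mem_closure_iff.1 hucl ε hε
      obtain ⟨f, hfW, hvf⟩ := hvA
      have hfc : Continuous f := W_cont hfW
      have hIf : IntegrableOn (fun z => f z * γt z) Db volume := hIntMul f hfc
      have hzero : (∫ z in Db, f z * γt z) = 0 := by
        rw [show (∫ z in Db, f z * γt z) = ∫ z in Db, γt z * f z from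
          integral_congr_ae (ae_of_all _ (fun z => mul_comm (f z) (γt z)))]
        exact momW f hfW
      have hrw : (∫ z in Db, g z * γt z) = ∫ z in Db, (g z - f z) * γt z := by
        have : (∫ z in Db, (g z - f z) * γt z)
            = (∫ z in Db, g z * γt z) - ∫ z in Db, f z * γt z := by
          simp only [sub_mul]
          exact integral_sub hIg hIf
        rw [this, hzero, sub_zero]
      have hbound : ∀ᵐ z ∂(volume.restrict Db), |g z - f z| * |γt z| ≤ ε * |γt z| := by
        refine (ae_restrict_iff' measurableSet_ball).2 (ae_of_all _ (fun z hz => ?_))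
        have hzK : z ∈ Kc := Metric.ball_subset_closedBall hz
        have h2 : |g z - f z| ≤ ε := by
          have h3 : g z - f z = u ⟨z, hzK⟩ - v ⟨z, hzK⟩ := by
            simp [hu, hvf ⟨z, hzK⟩]
          rw [h3]
          have h4 := ContinuousMap.dist_apply_le_dist (f := u) (g := v) (⟨z, hzK⟩ : Kc)
          rw [Real.dist_eq] at h4
          exact le_trans h4 (le_of_lt hv)
        exact mul_le_mul_of_nonneg_right h2 (abs_nonneg _)
      calc |∫ z in Db, g z * γt z| = |∫ z in Db, (g z - f z) * γt z| := by rw [hrw]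
        _ ≤ ∫ z in Db, |g z - f z| * |γt z| := by
            simpa [Real.norm_eq_abs, abs_mul] using
              norm_integral_le_integral_norm (μ := volume.restrict Db)
                (fun z => (g z - f z) * γt z)
        _ ≤ ∫ z in Db, ε * |γt z| := by
            refine integral_mono_ae ((hIg.sub hIf).abs.congr ?_) (hIntDb.abs.const_mul ε) hbound
            exact ae_of_all _ (fun z => by
              show |g z * γt z - f z * γt z| = |g z - f z| * |γt z|
              rw [← sub_mul, abs_mul])
        _ = ε * c := by rw [integral_const_mul]
    have habs : |∫ z in Db, g z * γt z| = 0 := by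
      by_contra hne
      have hpos : 0 < |∫ z in Db, g z * γt z| :=
        lt_of_le_of_ne (abs_nonneg _) (Ne.symm hne)
      have h5 := key (|∫ z in Db, g z * γt z| / (2 * (c + 1))) (by positivity)
      rw [div_mul_eq_mul_div] at h5
      have h7 := (le_div_iff₀ (by positivity : (0:ℝ) < 2 * (c + 1))).mp h5
      nlinarith [hpos, hc]
    have h6 : (∫ z in Db, g z * γt z) = 0 := abs_eq_zero.mp habs
    simpa [smul_eq_mul] using h6
  have hzeroSp : ∀ᵐ z ∂(volume.restrict Sp), γt z = 0 :=
    ae_restrict_of_ae_restrict_of_subset Sp_subset_Db hzeroDb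
  filter_upwards [hzeroSp, ae_restrict_mem isOpen_Sp.measurableSet] with z h1 h2
  rw [← hSp_eq z h2]
  exact h1



end EITAux

/-- uniqueness for the linearized incomplete problem on the upper half
disk `Ω_h = {z : |z| < 1, Im z > 0}`. If `γ ∈ L²(Ω_h)` satisfies
`∫_{Ω_h} γ ⟨∇Im(z^n), ∇Im(z^k)⟩ = 0` for all `n, k ≥ 1`, then `γ = 0` a.e. on `Ω_h`. -/
theorem linearized_EIT_half_disk_uniqueness (γ : ℂ → ℝ)
    (hγ : MemLp γ 2 (volume.restrict {z : ℂ | ‖z‖ < 1 ∧ 0 < z.im}))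
    (h : ∀ n k : ℕ, 1 ≤ n → 1 ≤ k →
      (∫ z in {z : ℂ | ‖z‖ < 1 ∧ 0 < z.im},
        γ z * ⟪gradient (fun w : ℂ => (w ^ n).im) z,
               gradient (fun w : ℂ => (w ^ k).im) z⟫) = 0) :
    ∀ᵐ z ∂(volume.restrict {z : ℂ | ‖z‖ < 1 ∧ 0 < z.im}), γ z = 0 := by
  have hset : {z : ℂ | ‖z‖ < 1 ∧ 0 < z.im} = Sp := rfl
  rw [hset] at hγ h ⊢
  have hae := hγ.aestronglyMeasurable
  set g : ℂ → ℝ := hae.mk γ with hgdef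
  have hgm : StronglyMeasurable g := hae.stronglyMeasurable_mk
  have heq : γ =ᵐ[volume.restrict Sp] g := hae.ae_eq_mk
  have hγg : MemLp g 2 (volume.restrict Sp) := hγ.ae_eq heq
  have momγ : ∀ a b : ℕ, (∫ z in Sp, γ z * gre a b z) = 0 := by
    intro a b
    have h1 := h (a + 1) (b + 1) (Nat.le_add_left 1 a) (Nat.le_add_left 1 b)
    have h2 : ∀ z : ℂ,
        γ z * ⟪gradient (fun w : ℂ => (w ^ (a + 1)).im) z,
               gradient (fun w : ℂ => (w ^ (b + 1)).im) z⟫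
          = (((a : ℝ) + 1) * ((b : ℝ) + 1)) * (γ z * gre a b z) := by
      intro z
      rw [inner_grads]
      simp only [Nat.add_sub_cancel]
      rw [show ((starRingEnd ℂ) (z ^ b)) = ((starRingEnd ℂ) z) ^ b from map_pow _ _ _]
      show γ z * ((↑(a + 1) : ℝ) * (↑(b + 1) : ℝ) * (uab a b z).re) = _
      rw [show gre a b z = (uab a b z).re from rfl]
      push_cast
      ring
    rw [integral_congr_ae (ae_of_all _ h2), integral_const_mul] at h1
    have hne : (((a : ℝ) + 1) * ((b : ℝ) + 1)) ≠ 0 := by positivity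
    exact (mul_eq_zero.mp h1).resolve_left hne
  have momg : ∀ a b : ℕ, (∫ z in Sp, g z * gre a b z) = 0 := by
    intro a b
    rw [← momγ a b]
    exact integral_congr_ae (heq.symm.mono fun z hz => by simp only [hz])
  have hfin := aux g hgm.measurable hγg momg
  filter_upwards [hfin, heq] with z h1 h2
  rw [h2]
  exact h1
end
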